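/- The polynomial F(ζ,w) = ζw² - 2(ζ² + ζ/b - q/(2b²))w + (ζ² + 2ζ/b + (1-q)/b²)ζ in two variables ζ, w over ℂ (with parameters b ≠ 0, q ≠ 0) is irreducible in ℂ[ζ,w]. -/

import Mathlib

namespace Stmt12Aux

open Polynomial

noncomputable def PA (b q : ℂ) : Polynomial ℂ := X ^ 2 + C (1 / b) * X - C (q / (2 * b ^ 2))
noncomputable def PB (b q : ℂ) : Polynomial ℂ :=
  (X ^ 2 + C (2 / b) * X + C ((1 - q) / b ^ 2)) * X
noncomputable def PP (b q : ℂ) : Polynomial (Polynomial ℂ) :=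
  C X * X ^ 2 - C (C 2 * PA b q) * X + C (PB b q)

lemma key_generic {S : Type*} [CommRing S] (u v : S) :
    ((X : Polynomial S) ^ 2 + C u * X - C v) ^ 2
      - X * ((X ^ 2 + C (2 * u) * X + C (u ^ 2 - 2 * v)) * X)
      = C (v ^ 2) - C (2 * u * v) * X := by
  simp only [map_mul, map_sub, map_pow, map_ofNat]
  ring

lemma key (b q : ℂ) (hb : b ≠ 0) :
    PA b q ^ 2 - X * PB b q
      = C ((q / (2 * b ^ 2)) ^ 2) - C (2 * (1 / b) * (q / (2 * b ^ 2))) * X := by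
  have h1 : (2 : ℂ) / b = 2 * (1 / b) := by ring
  have h2 : (1 - q) / b ^ 2 = (1 / b) ^ 2 - 2 * (q / (2 * b ^ 2)) := by
    field_simp
  rw [PA, PB, h1, h2, key_generic]

lemma coeff2 (b q : ℂ) : (PP b q).coeff 2 = X := by
  simp [PP, coeff_sub, coeff_add, coeff_C_mul, coeff_X_pow, coeff_X, coeff_C]

lemma coeff1 (b q : ℂ) : (PP b q).coeff 1 = -(C 2 * PA b q) := by
  simp [PP, coeff_sub, coeff_add, coeff_C_mul, coeff_X_pow, coeff_X, coeff_C]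

lemma natDegree_PP (b q : ℂ) : (PP b q).natDegree = 2 := by
  have h : PP b q = C X * X ^ 2 + C (-(C 2 * PA b q)) * X + C (PB b q) := by
    rw [PP]; simp [map_neg]; ring
  rw [h, natDegree_quadratic X_ne_zero]

lemma primitive (b q : ℂ) (hb : b ≠ 0) (hq : q ≠ 0) : (PP b q).IsPrimitive := by
  intro r hr
  rw [C_dvd_iff_dvd_coeff] at hr
  have h2 : r ∣ X := by simpa [coeff2] using hr 2
  obtain ⟨s, hs⟩ := h2
  rcases (prime_X (R := ℂ)).irreducible.isUnit_or_isUnit hs with h | h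
  · exact h
  · exfalso
    have hXr : (X : Polynomial ℂ) ∣ r := by
      obtain ⟨t, ht⟩ := h.exists_left_inv
      exact ⟨t, by rw [hs, mul_assoc, mul_comm s t, ht, mul_one]⟩
    have h1 : (X : Polynomial ℂ) ∣ -(C 2 * PA b q) := by
      exact hXr.trans (by simpa [coeff1] using hr 1)
    rw [X_dvd_iff] at h1
    simp [PA, coeff_C] at h1
    rcases h1 with h1 | h1
    · exact hq h1
    · exact hb h1

lemma irred_PP (b q : ℂ) (hb : b ≠ 0) (hq : q ≠ 0) : Irreducible (PP b q) := by
  set R := Polynomial ℂ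
  set K := RatFunc ℂ
  let φ := algebraMap R K
  rw [(primitive b q hb hq).irreducible_iff_irreducible_map_fraction_map (K := K)]
  have hinj : Function.Injective φ := IsFractionRing.injective R K
  have hdeg : ((PP b q).map φ).natDegree = 2 := by
    rw [natDegree_map_eq_of_injective hinj, natDegree_PP]
  rw [irreducible_iff_roots_eq_zero_of_degree_le_three hdeg.ge (hdeg.le.trans (by norm_num))]
  rw [Multiset.eq_zero_iff_forall_notMem]
  intro r hr
  have hroot : ((PP b q).map φ).eval r = 0 := (isRoot_of_mem_roots hr)
  rw [PP] at hroot
  simp only [Polynomial.map_add, Polynomial.map_sub, Polynomial.map_mul, Polynomial.map_pow,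
    map_C, map_X, eval_add, eval_sub, eval_mul, eval_pow, eval_C, eval_X] at hroot
  -- hroot : φ X * r ^ 2 - φ (C 2 * PA b q) * r + φ (PB b q) = 0
  have hx : φ (X : R) ≠ 0 := by
    simp only [ne_eq, map_eq_zero_iff φ hinj]
    exact X_ne_zero
  set u : K := φ (X : R) * r - φ (PA b q) with hu
  have hu2 : u ^ 2 = φ (PA b q ^ 2 - X * PB b q) := by
    rw [map_sub, map_mul, map_pow]
    have h2 : φ (C 2 * PA b q) = 2 * φ (PA b q) := by
      rw [show ((C 2 : R)) = (2 : R) from map_ofNat C 2, map_mul, map_ofNat]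
    rw [h2] at hroot
    rw [hu]
    linear_combination φ (X : R) * hroot
  set L : R := C ((q / (2 * b ^ 2)) ^ 2) - C (2 * (1 / b) * (q / (2 * b ^ 2))) * X with hL
  rw [key b q hb] at hu2
  have hint : IsIntegral R u := by
    refine ⟨X ^ 2 - C L, monic_X_pow_sub_C L two_ne_zero, ?_⟩
    simp only [eval₂_sub, eval₂_pow, eval₂_X, eval₂_C]
    rw [hu2]
    ring
  obtain ⟨p, hp⟩ := IsIntegrallyClosed.isIntegral_iff.mp hint
  have hpL : p ^ 2 = L := by
    apply hinj
    rw [map_pow, hp, hu2]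
  have hLdeg : L.natDegree = 1 := by
    have : L = C (-(2 * (1 / b) * (q / (2 * b ^ 2)))) * X + C ((q / (2 * b ^ 2)) ^ 2) := by
      rw [hL, map_neg]; ring
    rw [this, natDegree_linear]
    intro h
    apply hq
    field_simp at h
    linear_combination -h
  have := natDegree_pow p 2
  rw [hpL, hLdeg] at this
  omega

end Stmt12Aux

open MvPolynomial

noncomputable def E2 : MvPolynomial (Fin 2) ℂ ≃ₐ[ℂ] Polynomial (Polynomial ℂ) :=
  (renameEquiv ℂ (Equiv.swap 0 1)).trans <|
    (finSuccEquiv ℂ 1).trans <|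
      Polynomial.mapAlgEquiv
        ((finSuccEquiv ℂ 0).trans (Polynomial.mapAlgEquiv (isEmptyAlgEquiv ℂ (Fin 0))))

lemma E2_X0 : E2 (X 0) = Polynomial.C Polynomial.X := by
  have h : (X 1 : MvPolynomial (Fin 2) ℂ) = X (Fin.succ 0) := rfl
  simp only [E2, AlgEquiv.trans_apply, renameEquiv_apply, rename_X, Equiv.swap_apply_left, h,
    finSuccEquiv_X_succ, Polynomial.mapAlgEquiv, AlgEquiv.ofAlgHom_apply]
  simp [Polynomial.mapAlgHom, finSuccEquiv_X_zero]

lemma E2_X1 : E2 (X 1) = Polynomial.X := by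
  simp only [E2, AlgEquiv.trans_apply, renameEquiv_apply, rename_X, Equiv.swap_apply_right,
    finSuccEquiv_X_zero, Polynomial.mapAlgEquiv, AlgEquiv.ofAlgHom_apply]
  simp [Polynomial.mapAlgHom]

lemma E2_C (a : ℂ) : E2 (C a) = Polynomial.C (Polynomial.C a) := by
  have := E2.commutes a
  simpa [algebraMap_eq, Polynomial.algebraMap_eq] using this

/-- The polynomial `F(ζ,w) = ζw² - 2(ζ² + ζ/b - q/(2b²))w + (ζ² + 2ζ/b + (1-q)/b²)ζ`
is irreducible in `ℂ[ζ,w]` (here `X 0 = ζ`, `X 1 = w`). -/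
theorem stmt_12 (b q : ℂ) (hb : b ≠ 0) (hq : q ≠ 0) :
    Irreducible
      ((X 0 * X 1 ^ 2
        - C 2 * (X 0 ^ 2 + C (1 / b) * X 0 - C (q / (2 * b ^ 2))) * X 1
        + (X 0 ^ 2 + C (2 / b) * X 0 + C ((1 - q) / b ^ 2)) * X 0 :
          MvPolynomial (Fin 2) ℂ)) := by
  have h := Stmt12Aux.irred_PP b q hb hq
  have hE : E2 (X 0 * X 1 ^ 2
        - C 2 * (X 0 ^ 2 + C (1 / b) * X 0 - C (q / (2 * b ^ 2))) * X 1
        + (X 0 ^ 2 + C (2 / b) * X 0 + C ((1 - q) / b ^ 2)) * X 0)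
      = Stmt12Aux.PP b q := by
    rw [Stmt12Aux.PP, Stmt12Aux.PA, Stmt12Aux.PB]
    simp only [map_add, map_sub, map_mul, map_pow, E2_X0, E2_X1, E2_C]
  exact (MulEquiv.irreducible_iff E2).mp (hE ▸ h)
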